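/- arXiv:2011.00204 — 5 statements merged into one kernel-verified Lean document; each statement's English description precedes it below -/
import Mathlib

section
/- Let n ≥ 3 be an integer and c₀ > 0 a real constant, and define u(ρ) = √(1 − 1/(1 + c₀·sinh^{n−2}(ρ)·cosh²(ρ))) for ρ > 0. Then u is differentiable on (0, ∞) and satisfies, for every ρ > 0, the radial quasi-spherical equation (n−1)·coth(ρ)·u′(ρ) = (1/2)·(u(ρ) − u(ρ)³)·( (n−1)(n−2)/sinh²(ρ) + n(n−1) ). -/
open Real

/-- The explicit radial quasi-spherical solution
`u(ρ) = √(1 − 1/(1 + c₀ sinh^{n−2}(ρ) cosh²(ρ)))` is differentiable on `(0, ∞)` and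
satisfies `(n−1) coth(ρ) u′(ρ) = ½ (u − u³)((n−1)(n−2)/sinh²ρ + n(n−1))`. -/
theorem stmt_0 (n : ℕ) (hn : 3 ≤ n) (c₀ : ℝ) (hc₀ : 0 < c₀)
    (u : ℝ → ℝ)
    (hu : ∀ ρ : ℝ, u ρ = Real.sqrt (1 - 1 / (1 + c₀ * Real.sinh ρ ^ (n - 2) * Real.cosh ρ ^ 2))) :
    ∀ ρ : ℝ, 0 < ρ →
      DifferentiableAt ℝ u ρ ∧
      ((n : ℝ) - 1) * (Real.cosh ρ / Real.sinh ρ) * deriv u ρ =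
        (1 / 2) * (u ρ - u ρ ^ 3) *
          (((n : ℝ) - 1) * ((n : ℝ) - 2) / Real.sinh ρ ^ 2 + (n : ℝ) * ((n : ℝ) - 1)) := by
  obtain ⟨m, rfl⟩ : ∃ m, n = m + 3 := ⟨n - 3, by omega⟩
  have hsub : m + 3 - 2 = m + 1 := rfl
  simp only [hsub] at hu
  intro ρ hρ
  have hs : 0 < Real.sinh ρ := Real.sinh_pos_iff.mpr hρ
  have hc : 0 < Real.cosh ρ := Real.cosh_pos ρ
  have hpow : (0:ℝ) < Real.sinh ρ ^ (m+1) := pow_pos hs _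
  have hW1 : 1 < 1 + c₀ * Real.sinh ρ ^ (m+1) * Real.cosh ρ ^ 2 := by
    have h := mul_pos (mul_pos hc₀ hpow) (pow_pos hc 2)
    linarith
  set W : ℝ := 1 + c₀ * Real.sinh ρ ^ (m+1) * Real.cosh ρ ^ 2 with hW
  have hWpos : (0:ℝ) < W := by linarith
  set W' : ℝ := c₀ * (((m:ℝ)+1) * Real.sinh ρ ^ m * Real.cosh ρ * Real.cosh ρ ^ 2
      + Real.sinh ρ ^ (m+1) * (2 * Real.cosh ρ * Real.sinh ρ)) with hW'
  have hfun : (fun x => 1 + c₀ * Real.sinh x ^ (m+1) * Real.cosh x ^ 2)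
      = fun x => 1 + c₀ * (Real.sinh x ^ (m+1) * Real.cosh x ^ 2) := by
    funext x; ring
  have hw : HasDerivAt (fun x => 1 + c₀ * Real.sinh x ^ (m+1) * Real.cosh x ^ 2) W' ρ := by
    rw [hfun]
    have h1 : HasDerivAt (fun x => Real.sinh x ^ (m+1))
        (((m:ℝ)+1) * Real.sinh ρ ^ m * Real.cosh ρ) ρ := by
      have := (Real.hasDerivAt_sinh ρ).fun_pow (m+1)
      simpa using this
    have h2 : HasDerivAt (fun x => Real.cosh x ^ 2) (2 * Real.cosh ρ * Real.sinh ρ) ρ := by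
      have := (Real.hasDerivAt_cosh ρ).fun_pow 2
      simpa [mul_comm] using this
    have h3 := ((h1.fun_mul h2).const_mul c₀).const_add 1
    convert h3 using 1
  have hv : HasDerivAt (fun x => 1 - 1 / (1 + c₀ * Real.sinh x ^ (m+1) * Real.cosh x ^ 2))
      (W' / W ^ 2) ρ := by
    have h4 := ((hasDerivAt_const ρ (1:ℝ)).fun_div hw hWpos.ne').const_sub 1
    refine h4.congr_deriv ?_
    rw [← hW]; ring
  have hV : 0 < 1 - 1 / W := by
    rw [sub_pos, div_lt_one hWpos]; exact hW1
  have huu : u = fun x => Real.sqrt (1 - 1 / (1 + c₀ * Real.sinh x ^ (m+1) * Real.cosh x ^ 2)) :=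
    funext hu
  have hderiv : HasDerivAt u ((W' / W ^ 2) / (2 * Real.sqrt (1 - 1 / W))) ρ := by
    rw [huu]
    exact hv.sqrt hV.ne'
  refine ⟨hderiv.differentiableAt, ?_⟩
  rw [hderiv.deriv, hu ρ, ← hW]
  set q : ℝ := Real.sqrt (1 - 1 / W) with hqdef
  have hq : q ^ 2 = 1 - 1 / W := Real.sq_sqrt hV.le
  have hqpos : 0 < q := Real.sqrt_pos.mpr hV
  have hq3 : q ^ 3 = (1 - 1 / W) * q := by rw [pow_succ, hq]
  have hq2W : q ^ 2 * W = W - 1 := by rw [hq]; field_simp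
  have hid : Real.cosh ρ ^ 2 = Real.sinh ρ ^ 2 + 1 := Real.cosh_sq ρ
  have key : ((m:ℝ)+2) * Real.cosh ρ * Real.sinh ρ * W' =
      (W - 1) * (((m:ℝ)+2)*((m:ℝ)+1) + ((m:ℝ)+3)*((m:ℝ)+2) * Real.sinh ρ ^ 2) := by
    rw [hW', hW, pow_succ]
    linear_combination (((m:ℝ)+2)*((m:ℝ)+1)*c₀ * (Real.sinh ρ ^ m * Real.sinh ρ)
      * Real.cosh ρ ^ 2) * hid
  have hcs : ((m:ℝ)+2) * Real.cosh ρ * Real.sinh ρ ≠ 0 := by positivity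
  have hW'val : W' = q ^ 2 * W * (((m:ℝ)+2)*((m:ℝ)+1) + ((m:ℝ)+3)*((m:ℝ)+2) * Real.sinh ρ ^ 2)
      / (((m:ℝ)+2) * Real.cosh ρ * Real.sinh ρ) := by
    rw [eq_div_iff hcs]
    linear_combination key - (((m:ℝ)+2)*((m:ℝ)+1) + ((m:ℝ)+3)*((m:ℝ)+2) * Real.sinh ρ ^ 2) * hq2W
  have hrel : q ^ 2 * (1 + c₀ * Real.sinh ρ ^ m * Real.sinh ρ * Real.cosh ρ ^ 2)
      = c₀ * Real.sinh ρ ^ m * Real.sinh ρ * Real.cosh ρ ^ 2 := by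
    have h := hq2W
    rw [hW] at h
    linear_combination h
  rw [hq3, hW'val]
  push_cast
  field_simp
  ring
end

section
/- Let n ≥ 3 be an integer and c₀ > 0, and define u(ρ) = √(1 − 1/(1 + c₀·sinh^{n−2}(ρ)·cosh²(ρ))) for ρ > 0. Then the function ρ ↦ 1 − u(ρ) is integrable on (0, ∞), and setting U(ρ) := ρ + ∫_ρ^∞ (1 − u(s)) ds, one has lim_{ρ→∞} (U(ρ) − ρ)·e^{nρ} = 2^{n−1}/(n·c₀). -/
open Real Filter MeasureTheory

/-- For the quasi-spherical solution `u(ρ) = √(1 − 1/(1 + c₀ sinh^{n−2}(ρ) cosh²(ρ)))`, the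
function `1 − u` is integrable on `(0,∞)`, and with `U(ρ) = ρ + ∫_ρ^∞ (1 − u)` one has
`lim_{ρ→∞} (U(ρ) − ρ) e^{nρ} = 2^{n−1}/(n c₀)`. -/
theorem stmt_4 (n : ℕ) (hn : 3 ≤ n) (c₀ : ℝ) (hc₀ : 0 < c₀)
    (u : ℝ → ℝ)
    (hu : ∀ ρ : ℝ, u ρ = Real.sqrt (1 - 1 / (1 + c₀ * Real.sinh ρ ^ (n - 2) * Real.cosh ρ ^ 2)))
    (U : ℝ → ℝ)
    (hU : ∀ ρ : ℝ, U ρ = ρ + ∫ s in Set.Ioi ρ, (1 - u s)) :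
    IntegrableOn (fun s : ℝ => 1 - u s) (Set.Ioi (0 : ℝ)) ∧
    Tendsto (fun ρ : ℝ => (U ρ - ρ) * Real.exp ((n : ℝ) * ρ)) atTop
      (nhds (2 ^ (n - 1) / ((n : ℝ) * c₀))) := by
  have hnpos : (0:ℝ) < (n:ℝ) := by
    have : 0 < n := by omega
    exact_mod_cast this
  set f : ℝ → ℝ := fun s => c₀ * Real.sinh s ^ (n - 2) * Real.cosh s ^ 2 with hf_def
  have hfpos : ∀ s : ℝ, 0 < s → 0 < f s := by
    intro s hs
    have h1 : 0 < Real.sinh s := Real.sinh_pos_iff.mpr hs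
    have h2 : 0 < Real.cosh s := Real.cosh_pos s
    positivity
  have hu_nonneg : ∀ s, 0 ≤ u s := fun s => by rw [hu]; exact Real.sqrt_nonneg _
  -- square identity and 0 ≤ u ≤ 1 for s > 0
  have hsq : ∀ s : ℝ, 0 < s → u s ^ 2 = 1 - 1 / (1 + f s) := by
    intro s hs
    have h1f : (0:ℝ) < 1 + f s := by linarith [hfpos s hs]
    have hle : 1 / (1 + f s) ≤ 1 := by
      rw [div_le_one h1f]; linarith [hfpos s hs]
    rw [hu]
    exact Real.sq_sqrt (by linarith)
  have hu_le : ∀ s : ℝ, 0 < s → u s ≤ 1 := by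
    intro s hs
    have h := hsq s hs
    nlinarith [hu_nonneg s, hfpos s hs,
      one_div_pos.mpr (show (0:ℝ) < 1 + f s by linarith [hfpos s hs])]
  -- key identity
  have hid : ∀ s : ℝ, 0 < s → 1 - u s = ((1 + f s) * (1 + u s))⁻¹ := by
    intro s hs
    have h1f : (0:ℝ) < 1 + f s := by linarith [hfpos s hs]
    have h1u : (0:ℝ) < 1 + u s := by linarith [hu_nonneg s]
    have key : (1 - u s) * ((1 + f s) * (1 + u s)) = 1 := by
      have h2 : (1 - u s ^ 2) * (1 + f s) = 1 := by
        rw [hsq s hs]; field_simp; ring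
      linear_combination h2
    exact eq_inv_of_mul_eq_one_left (by linear_combination key)
  -- measurability
  have hmeas : Measurable (fun s : ℝ => 1 - u s) := by
    have : (fun s : ℝ => 1 - u s)
        = fun s => 1 - Real.sqrt (1 - 1 / (1 + f s)) := by
      funext s; rw [hu]
    rw [this]
    fun_prop
  -- limits
  have hexp0 : Tendsto (fun s : ℝ => Real.exp (-s)) atTop (nhds 0) :=
    Real.tendsto_exp_neg_atTop_nhds_zero
  have hsinh : Tendsto (fun s : ℝ => Real.sinh s * Real.exp (-s)) atTop (nhds (1/2)) := by
    have heq : ∀ s : ℝ, Real.sinh s * Real.exp (-s) = (1 - Real.exp (-s) ^ 2) / 2 := by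
      intro s
      rw [Real.sinh_eq, Real.exp_neg]
      have := (Real.exp_pos s).ne'
      field_simp
    have h : Tendsto (fun s : ℝ => (1 - Real.exp (-s) ^ 2) / 2) atTop
        (nhds (((1:ℝ) - 0 ^ 2) / 2)) := (tendsto_const_nhds.sub (hexp0.pow 2)).div_const (2:ℝ)
    have h2 : ((1:ℝ) - 0 ^ 2) / 2 = 1/2 := by norm_num
    rw [h2] at h
    exact h.congr fun s => (heq s).symm
  have hcosh : Tendsto (fun s : ℝ => Real.cosh s * Real.exp (-s)) atTop (nhds (1/2)) := by
    have heq : ∀ s : ℝ, Real.cosh s * Real.exp (-s) = (1 + Real.exp (-s) ^ 2) / 2 := by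
      intro s
      rw [Real.cosh_eq, Real.exp_neg]
      have := (Real.exp_pos s).ne'
      field_simp
    have h : Tendsto (fun s : ℝ => (1 + Real.exp (-s) ^ 2) / 2) atTop
        (nhds (((1:ℝ) + 0 ^ 2) / 2)) := (tendsto_const_nhds.add (hexp0.pow 2)).div_const (2:ℝ)
    have h2 : ((1:ℝ) + 0 ^ 2) / 2 = 1/2 := by norm_num
    rw [h2] at h
    exact h.congr fun s => (heq s).symm
  have hfe : Tendsto (fun s : ℝ => f s * Real.exp (-((n:ℝ) * s))) atTop
      (nhds (c₀ / 2 ^ n)) := by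
    have heq : ∀ s : ℝ, f s * Real.exp (-((n:ℝ) * s))
        = c₀ * (Real.sinh s * Real.exp (-s)) ^ (n - 2)
          * (Real.cosh s * Real.exp (-s)) ^ 2 := by
      intro s
      have h1 : Real.exp (-((n:ℝ) * s)) = Real.exp (-s) ^ (n - 2) * Real.exp (-s) ^ 2 := by
        rw [← pow_add, (by omega : n - 2 + 2 = n), ← Real.exp_nat_mul, mul_neg]
      rw [h1, mul_pow, mul_pow, hf_def]
      ring
    have h : Tendsto (fun s : ℝ => c₀ * (Real.sinh s * Real.exp (-s)) ^ (n - 2)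
        * (Real.cosh s * Real.exp (-s)) ^ 2) atTop
        (nhds (c₀ * ((1:ℝ)/2) ^ (n - 2) * ((1:ℝ)/2) ^ 2)) :=
      (tendsto_const_nhds.mul (hsinh.pow (n - 2))).mul (hcosh.pow 2)
    have hval : c₀ * ((1:ℝ)/2) ^ (n - 2) * ((1:ℝ)/2) ^ 2 = c₀ / 2 ^ n := by
      rw [mul_assoc, ← pow_add, (by omega : n - 2 + 2 = n), one_div, inv_pow,
        ← div_eq_mul_inv]
    rw [hval] at h
    exact h.congr fun s => (heq s).symm
  have hns : Tendsto (fun s : ℝ => (n:ℝ) * s) atTop atTop :=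
    Tendsto.const_mul_atTop hnpos tendsto_id
  have hexpn : Tendsto (fun s : ℝ => Real.exp ((n:ℝ) * s)) atTop atTop :=
    Real.tendsto_exp_atTop.comp hns
  have hexpn0 : Tendsto (fun s : ℝ => Real.exp (-((n:ℝ) * s))) atTop (nhds 0) := by
    have := Real.tendsto_exp_neg_atTop_nhds_zero.comp hns
    exact this
  have hfa : Tendsto f atTop atTop := by
    have h := Filter.Tendsto.pos_mul_atTop (by positivity : (0:ℝ) < c₀ / 2 ^ n) hfe hexpn
    refine h.congr fun s => ?_
    rw [mul_assoc, ← Real.exp_add]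
    simp
  have hu1 : Tendsto u atTop (nhds 1) := by
    have h0 : Tendsto (fun s => 1 + f s) atTop atTop :=
      tendsto_atTop_add_const_left _ 1 hfa
    have h2 : Tendsto (fun s => (1 + f s)⁻¹) atTop (nhds 0) := h0.inv_tendsto_atTop
    have h3 : Tendsto (fun s => 1 - 1 / (1 + f s)) atTop (nhds 1) := by
      have h5 : Tendsto (fun s : ℝ => 1 - (1 + f s)⁻¹) atTop (nhds ((1:ℝ) - 0)) :=
        tendsto_const_nhds.sub h2
      simpa [one_div] using h5
    have h4 := (Real.continuous_sqrt.tendsto 1).comp h3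
    rw [Real.sqrt_one] at h4
    exact h4.congr fun s => (hu s).symm
  -- the main pointwise asymptotics
  have hg : Tendsto (fun s : ℝ => (1 - u s) * Real.exp ((n:ℝ) * s)) atTop
      (nhds (2 ^ (n - 1) / c₀)) := by
    have h1 : Tendsto
        (fun s : ℝ => Real.exp (-((n:ℝ) * s)) + f s * Real.exp (-((n:ℝ) * s)))
        atTop (nhds (c₀ / 2 ^ n)) := by
      have := hexpn0.add hfe
      simpa using this
    have hcne : (c₀ / 2 ^ n : ℝ) ≠ 0 := by positivity
    have h2 := (h1.inv₀ hcne).mul ((tendsto_const_nhds.add hu1).inv₀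
      (by norm_num : ((1:ℝ) + 1) ≠ 0))
    have hval2 : (c₀ / 2 ^ n : ℝ)⁻¹ * ((1:ℝ) + 1)⁻¹ = 2 ^ (n - 1) / c₀ := by
      have h2n : (2:ℝ) ^ n = 2 ^ (n - 1) * 2 := by
        rw [← pow_succ]; congr 1; omega
      rw [h2n]
      field_simp
      ring
    rw [hval2] at h2
    refine h2.congr' ?_
    filter_upwards [eventually_gt_atTop (0:ℝ)] with s hs
    have h1f : (0:ℝ) < 1 + f s := by linarith [hfpos s hs]
    have h1u : (0:ℝ) < 1 + u s := by linarith [hu_nonneg s]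
    have hE := (Real.exp_pos ((n:ℝ) * s)).ne'
    rw [hid s hs, Real.exp_neg]
    field_simp
  -- Integrability on (0, ∞)
  obtain ⟨ρ₁, hρ₁⟩ := (Metric.tendsto_atTop.mp hg 1 one_pos)
  set ρ₂ : ℝ := max ρ₁ 1 with hρ₂def
  have hρ₂pos : (0:ℝ) < ρ₂ := lt_of_lt_of_le one_pos (le_max_right _ _)
  have hgbound : ∀ s : ℝ, ρ₂ ≤ s →
      |1 - u s| ≤ (|2 ^ (n - 1) / c₀| + 1) * Real.exp (-((n:ℝ) * s)) := by
    intro s hs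
    have hd := hρ₁ s (le_trans (le_max_left _ _) hs)
    rw [Real.dist_eq] at hd
    have hbig : |(1 - u s) * Real.exp ((n:ℝ) * s)| ≤ |2 ^ (n - 1) / c₀| + 1 := by
      have h0 := abs_sub_abs_le_abs_sub ((1 - u s) * Real.exp ((n:ℝ) * s))
        ((2:ℝ) ^ (n - 1) / c₀)
      linarith
    have hEpos : 0 < Real.exp ((n:ℝ) * s) := Real.exp_pos _
    have : |1 - u s| = |(1 - u s) * Real.exp ((n:ℝ) * s)| * Real.exp (-((n:ℝ) * s)) := by
      rw [abs_mul, abs_of_pos hEpos, mul_assoc, ← Real.exp_add]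
      simp
    rw [this]
    exact mul_le_mul_of_nonneg_right hbig (Real.exp_pos _).le
  have hint_tail : IntegrableOn (fun s : ℝ => 1 - u s) (Set.Ioi ρ₂) := by
    have hie : IntegrableOn
        (fun s : ℝ => (|2 ^ (n - 1) / c₀| + 1) * Real.exp (-(n:ℝ) * s)) (Set.Ioi ρ₂) :=
      (exp_neg_integrableOn_Ioi ρ₂ hnpos).const_mul _
    refine Integrable.mono hie (hmeas.aestronglyMeasurable.restrict
      (μ := volume) (s := Set.Ioi ρ₂)) ?_
    refine (ae_restrict_iff' measurableSet_Ioi).mpr (Filter.Eventually.of_forall ?_)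
    intro s hs
    have := hgbound s (le_of_lt hs)
    rw [Real.norm_eq_abs, Real.norm_eq_abs]
    have habs : |(|2 ^ (n - 1) / c₀| + 1) * Real.exp (-(n:ℝ) * s)|
        = (|2 ^ (n - 1) / c₀| + 1) * Real.exp (-(n:ℝ) * s) := by
      apply abs_of_nonneg
      positivity
    rw [habs, neg_mul]
    exact this
  have hint_head : IntegrableOn (fun s : ℝ => 1 - u s) (Set.Ioc 0 ρ₂) := by
    apply Measure.integrableOn_of_bounded (M := 1)
    · exact (measure_Ioc_lt_top).ne
    · exact hmeas.aestronglyMeasurable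
    · refine (ae_restrict_iff' measurableSet_Ioc).mpr (Filter.Eventually.of_forall ?_)
      intro s hs
      rw [Real.norm_eq_abs]
      rcases hs with ⟨hs0, _⟩
      have := hu_le s hs0
      have := hu_nonneg s
      rw [abs_le]
      constructor <;> linarith
  have hint : IntegrableOn (fun s : ℝ => 1 - u s) (Set.Ioi (0:ℝ)) := by
    have := hint_head.union hint_tail
    refine this.mono_set ?_
    intro x hx
    rcases le_or_gt x ρ₂ with h | h
    · exact Or.inl ⟨hx, h⟩
    · exact Or.inr h
  refine ⟨hint, ?_⟩
  -- exact value of the exponential integral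
  have hexpint : ∀ ρ : ℝ, ∫ s in Set.Ioi ρ, Real.exp (-((n:ℝ) * s))
      = Real.exp (-((n:ℝ) * ρ)) / n := by
    intro ρ
    have hderiv : ∀ x ∈ Set.Ici ρ, HasDerivAt (fun x : ℝ => Real.exp (-((n:ℝ) * x)) / (-(n:ℝ)))
        (Real.exp (-((n:ℝ) * x))) x := by
      intro x _
      have h1 : HasDerivAt (fun x : ℝ => -((n:ℝ) * x)) (-(n:ℝ)) x := by
        have h := ((hasDerivAt_id' x).const_mul (n:ℝ)).neg
        simp only [mul_one] at h
        exact h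
      have h2 := (h1.exp).div_const (-(n:ℝ))
      exact h2.congr_deriv (by rw [mul_div_assoc, div_self (neg_ne_zero.mpr hnpos.ne'), mul_one])
    have hintexp : IntegrableOn (fun x : ℝ => Real.exp (-((n:ℝ) * x))) (Set.Ioi ρ) := by
      have := exp_neg_integrableOn_Ioi ρ hnpos
      simpa [neg_mul] using this
    have htend : Tendsto (fun x : ℝ => Real.exp (-((n:ℝ) * x)) / (-(n:ℝ))) atTop (nhds 0) := by
      have := hexpn0.div_const (-(n:ℝ))
      simpa using this
    have := MeasureTheory.integral_Ioi_of_hasDerivAt_of_tendsto'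
      (fun x hx => hderiv x hx) hintexp htend
    rw [this]
    field_simp
    ring
  -- final ε-argument
  have htarget : (2:ℝ) ^ (n - 1) / ((n:ℝ) * c₀) = (2 ^ (n - 1) / c₀) / n := by
    field_simp
  rw [htarget]
  set L : ℝ := 2 ^ (n - 1) / c₀ with hLdef
  rw [Metric.tendsto_atTop]
  intro ε hε
  obtain ⟨ρ₀, hρ₀⟩ := Metric.tendsto_atTop.mp hg (ε * n / 2) (by positivity)
  refine ⟨max ρ₀ 1, fun ρ hρ => ?_⟩
  have hρpos : (0:ℝ) < ρ := lt_of_lt_of_le one_pos (le_trans (le_max_right _ _) hρ)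
  have hρρ₀ : ρ₀ ≤ ρ := le_trans (le_max_left _ _) hρ
  set δ : ℝ := ε * n / 2 with hδdef
  have hδpos : 0 < δ := by positivity
  -- pointwise bounds on (ρ, ∞)
  have hlow : ∀ s ∈ Set.Ioi ρ, (L - δ) * Real.exp (-((n:ℝ) * s)) ≤ 1 - u s := by
    intro s hs
    have hd := hρ₀ s (le_trans hρρ₀ (le_of_lt hs))
    rw [Real.dist_eq, abs_lt] at hd
    have h1 : L - δ ≤ (1 - u s) * Real.exp ((n:ℝ) * s) := by linarith [hd.1]
    have := mul_le_mul_of_nonneg_right h1 (Real.exp_pos (-((n:ℝ) * s))).le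
    calc (L - δ) * Real.exp (-((n:ℝ) * s))
        ≤ (1 - u s) * Real.exp ((n:ℝ) * s) * Real.exp (-((n:ℝ) * s)) := this
      _ = 1 - u s := by rw [mul_assoc, ← Real.exp_add]; simp
  have hhigh : ∀ s ∈ Set.Ioi ρ, 1 - u s ≤ (L + δ) * Real.exp (-((n:ℝ) * s)) := by
    intro s hs
    have hd := hρ₀ s (le_trans hρρ₀ (le_of_lt hs))
    rw [Real.dist_eq, abs_lt] at hd
    have h1 : (1 - u s) * Real.exp ((n:ℝ) * s) ≤ L + δ := by linarith [hd.2]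
    have := mul_le_mul_of_nonneg_right h1 (Real.exp_pos (-((n:ℝ) * s))).le
    calc 1 - u s
        = (1 - u s) * Real.exp ((n:ℝ) * s) * Real.exp (-((n:ℝ) * s)) := by
          rw [mul_assoc, ← Real.exp_add]; simp
      _ ≤ (L + δ) * Real.exp (-((n:ℝ) * s)) := this
  -- integrability on Ioi ρ
  have hIg : IntegrableOn (fun s : ℝ => 1 - u s) (Set.Ioi ρ) :=
    hint.mono_set (Set.Ioi_subset_Ioi hρpos.le)
  have hIeraw : IntegrableOn (fun s : ℝ => Real.exp (-((n:ℝ) * s))) (Set.Ioi ρ) := by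
    have := exp_neg_integrableOn_Ioi ρ hnpos
    simpa [neg_mul] using this
  have hIlo : IntegrableOn (fun s : ℝ => (L - δ) * Real.exp (-((n:ℝ) * s))) (Set.Ioi ρ) :=
    hIeraw.const_mul _
  have hIhi : IntegrableOn (fun s : ℝ => (L + δ) * Real.exp (-((n:ℝ) * s))) (Set.Ioi ρ) :=
    hIeraw.const_mul _
  have hintlo : (L - δ) * (Real.exp (-((n:ℝ) * ρ)) / n) ≤ ∫ s in Set.Ioi ρ, (1 - u s) := by
    have := setIntegral_mono_on hIlo hIg measurableSet_Ioi hlow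
    rwa [integral_const_mul, hexpint ρ] at this
  have hinthi : (∫ s in Set.Ioi ρ, (1 - u s)) ≤ (L + δ) * (Real.exp (-((n:ℝ) * ρ)) / n) := by
    have := setIntegral_mono_on hIg hIhi measurableSet_Ioi hhigh
    rwa [integral_const_mul, hexpint ρ] at this
  -- conclude
  have hUeq : U ρ - ρ = ∫ s in Set.Ioi ρ, (1 - u s) := by rw [hU]; ring
  rw [Real.dist_eq, hUeq]
  set I : ℝ := ∫ s in Set.Ioi ρ, (1 - u s) with hIdef
  have hEpos : 0 < Real.exp ((n:ℝ) * ρ) := Real.exp_pos _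
  have hcancel : Real.exp (-((n:ℝ) * ρ)) * Real.exp ((n:ℝ) * ρ) = 1 := by
    rw [← Real.exp_add]; simp
  have hlo2 : (L - δ) / n ≤ I * Real.exp ((n:ℝ) * ρ) := by
    have h := mul_le_mul_of_nonneg_right hintlo hEpos.le
    have heq : (L - δ) * (Real.exp (-((n:ℝ) * ρ)) / n) * Real.exp ((n:ℝ) * ρ)
        = (L - δ) / n := by
      linear_combination ((L - δ) / (n:ℝ)) * hcancel
    linarith [heq ▸ h]
  have hhi2 : I * Real.exp ((n:ℝ) * ρ) ≤ (L + δ) / n := by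
    have h := mul_le_mul_of_nonneg_right hinthi hEpos.le
    have heq : (L + δ) * (Real.exp (-((n:ℝ) * ρ)) / n) * Real.exp ((n:ℝ) * ρ)
        = (L + δ) / n := by
      linear_combination ((L + δ) / (n:ℝ)) * hcancel
    linarith [heq ▸ h]
  have hδn : δ / n = ε / 2 := by
    rw [hδdef]
    field_simp
  have h1 : (L - δ) / n = L / n - δ / n := by ring
  have h2 : (L + δ) / n = L / n + δ / n := by ring
  rw [abs_lt]
  constructor <;> nlinarith
end

section
/- Let n ≥ 3 be an integer and c₀ > 0, define u(ρ) = √(1 − 1/(1 + c₀·sinh^{n−2}(ρ)·cosh²(ρ))), U(ρ) := ρ + ∫_ρ^∞ (1 − u(s)) ds, and r(ρ) := ln( (e^{U(ρ)} + 1)/(e^{U(ρ)} − 1) ) for ρ > 0 (well defined since U(ρ) > ρ > 0). Then r is differentiable on (0, ∞), r(ρ) > 0, and r′(ρ) = −u(ρ)·sinh(r(ρ)) for every ρ > 0; equivalently, −(1/sinh r) dr = u dρ. -/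
open Real Filter MeasureTheory

/-- With `u(ρ) = √(1 − 1/(1 + c₀ sinh^{n−2}(ρ) cosh²(ρ)))`, `U(ρ) = ρ + ∫_ρ^∞ (1 − u)`, and
`r(ρ) = ln((e^{U(ρ)} + 1)/(e^{U(ρ)} − 1))`, the function `r` is differentiable on `(0,∞)`,
positive, and satisfies `r′(ρ) = −u(ρ) sinh(r(ρ))`, i.e. `−(1/sinh r) dr = u dρ`. -/
theorem stmt_7 (n : ℕ) (hn : 3 ≤ n) (c₀ : ℝ) (hc₀ : 0 < c₀)
    (u : ℝ → ℝ)
    (hu : ∀ ρ : ℝ, u ρ = Real.sqrt (1 - 1 / (1 + c₀ * Real.sinh ρ ^ (n - 2) * Real.cosh ρ ^ 2)))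
    (U : ℝ → ℝ)
    (hU : ∀ ρ : ℝ, U ρ = ρ + ∫ s in Set.Ioi ρ, (1 - u s))
    (r : ℝ → ℝ)
    (hr : ∀ ρ : ℝ, r ρ = Real.log ((Real.exp (U ρ) + 1) / (Real.exp (U ρ) - 1))) :
    ∀ ρ : ℝ, 0 < ρ →
      0 < r ρ ∧ HasDerivAt r (-(u ρ * Real.sinh (r ρ))) ρ := by
  -- notation
  set f : ℝ → ℝ := fun s => 1 - u s with hf
  -- basic facts about u
  have hgpos : ∀ s : ℝ, 0 < s → 0 < c₀ * Real.sinh s ^ (n - 2) * Real.cosh s ^ 2 := by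
    intro s hs
    have h1 : 0 < Real.sinh s := Real.sinh_pos_iff.mpr hs
    positivity
  have hu01 : ∀ s : ℝ, 0 < s → 0 ≤ u s ∧ u s ≤ 1 := by
    intro s hs
    have hg := hgpos s hs
    constructor
    · rw [hu]; exact Real.sqrt_nonneg _
    · rw [hu]
      have : 1 - 1 / (1 + c₀ * Real.sinh s ^ (n - 2) * Real.cosh s ^ 2) ≤ 1 := by
        have : 0 ≤ 1 / (1 + c₀ * Real.sinh s ^ (n - 2) * Real.cosh s ^ 2) := by positivity
        linarith
      calc Real.sqrt _ ≤ Real.sqrt 1 := Real.sqrt_le_sqrt this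
        _ = 1 := Real.sqrt_one
  have hf_nonneg : ∀ s : ℝ, 0 < s → 0 ≤ f s := fun s hs => by
    have := (hu01 s hs).2; simp only [hf]; linarith
  -- pointwise bound: for 0 < a ≤ s, f s ≤ (4 / (c₀ * sinh a ^ (n-2))) * exp (-2 * s)
  have hbound : ∀ a : ℝ, 0 < a → ∀ s : ℝ, a ≤ s →
      f s ≤ 4 / (c₀ * Real.sinh a ^ (n - 2)) * Real.exp (-2 * s) := by
    intro a ha s hs
    have hspos : 0 < s := lt_of_lt_of_le ha hs
    have hg := hgpos s hspos
    set G := c₀ * Real.sinh s ^ (n - 2) * Real.cosh s ^ 2 with hG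
    have hx1 : (1 : ℝ) / (1 + G) ≤ 1 := by
      rw [div_le_one (by linarith)]; linarith
    have hx0 : (0 : ℝ) ≤ 1 / (1 + G) := by positivity
    -- 1 - u s ≤ 1/(1+G)
    have h1 : f s ≤ 1 / (1 + G) := by
      have harg : 1 - 1 / (1 + G) ≤ u s ^ 2 ∨ True := Or.inr trivial
      have hsq : (1 - 1 / (1 + G)) ≤ Real.sqrt (1 - 1 / (1 + G)) := by
        rw [Real.le_sqrt (by linarith)] <;> nlinarith
      have : u s = Real.sqrt (1 - 1 / (1 + G)) := hu s
      simp only [hf]; linarith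
    -- 1/(1+G) ≤ C exp(-2s)
    have hsa : 0 < Real.sinh a := Real.sinh_pos_iff.mpr ha
    have hsinh : Real.sinh a ^ (n - 2) ≤ Real.sinh s ^ (n - 2) :=
      pow_le_pow_left₀ hsa.le (Real.sinh_le_sinh.mpr hs) _
    have hcosh : Real.exp s / 2 ≤ Real.cosh s := by
      rw [Real.cosh_eq]
      have : 0 < Real.exp (-s) := Real.exp_pos _
      linarith
    have hG' : c₀ * Real.sinh a ^ (n - 2) * (Real.exp s / 2) ^ 2 ≤ G := by
      have h2 : (Real.exp s / 2) ^ 2 ≤ Real.cosh s ^ 2 :=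
        pow_le_pow_left₀ (by positivity) hcosh 2
      have hsp : 0 ≤ Real.sinh s ^ (n - 2) := by positivity
      calc c₀ * Real.sinh a ^ (n - 2) * (Real.exp s / 2) ^ 2
          ≤ c₀ * Real.sinh s ^ (n - 2) * (Real.exp s / 2) ^ 2 := by
            apply mul_le_mul_of_nonneg_right _ (by positivity)
            exact mul_le_mul_of_nonneg_left hsinh hc₀.le
        _ ≤ G := mul_le_mul_of_nonneg_left h2 (by positivity)
    have hG'pos : 0 < c₀ * Real.sinh a ^ (n - 2) * (Real.exp s / 2) ^ 2 := by positivity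
    have h2 : 1 / (1 + G) ≤ 1 / (c₀ * Real.sinh a ^ (n - 2) * (Real.exp s / 2) ^ 2) :=
      one_div_le_one_div_of_le hG'pos (by linarith)
    have h3 : 1 / (c₀ * Real.sinh a ^ (n - 2) * (Real.exp s / 2) ^ 2)
        = 4 / (c₀ * Real.sinh a ^ (n - 2)) * Real.exp (-2 * s) := by
      rw [show (-2 : ℝ) * s = -(2 * s) by ring, Real.exp_neg]
      have he : Real.exp (2 * s) = Real.exp s ^ 2 := by
        rw [two_mul, Real.exp_add, sq]
      rw [he]
      field_simp
      ring
    linarith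
  -- integrability of f on Ioi a, for a > 0
  have hmeas_u : Measurable u := by
    have : u = fun s => Real.sqrt (1 - 1 / (1 + c₀ * Real.sinh s ^ (n - 2) * Real.cosh s ^ 2)) :=
      funext hu
    rw [this]; fun_prop
  have hInt : ∀ a : ℝ, 0 < a → IntegrableOn f (Set.Ioi a) := by
    intro a ha
    apply Integrable.mono' ((exp_neg_integrableOn_Ioi a (by norm_num : (0:ℝ) < 2)).const_mul
      (4 / (c₀ * Real.sinh a ^ (n - 2))))
    · exact ((measurable_const.sub hmeas_u).aestronglyMeasurable).restrict
    · filter_upwards [ae_restrict_mem measurableSet_Ioi] with s hs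
      rw [Real.norm_eq_abs, abs_of_nonneg (hf_nonneg s (lt_trans ha hs))]
      exact hbound a ha s (le_of_lt hs)
  -- continuity of f on (0, ∞)
  have hcont : ContinuousOn f (Set.Ioi 0) := by
    have hcu : ContinuousOn u (Set.Ioi 0) := by
      have : u = fun s => Real.sqrt (1 - 1 / (1 + c₀ * Real.sinh s ^ (n - 2) * Real.cosh s ^ 2)) :=
        funext hu
      rw [this]
      apply Real.continuous_sqrt.comp_continuousOn
      apply ContinuousOn.sub continuousOn_const
      apply ContinuousOn.div continuousOn_const
      · fun_prop
      · intro s hs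
        have := hgpos s hs
        positivity
    exact continuousOn_const.sub hcu
  intro ρ hρ
  -- U ρ' > 0 for ρ' > 0
  have hUpos : ∀ ρ' : ℝ, 0 < ρ' → 0 < U ρ' := by
    intro ρ' hρ'
    rw [hU]
    have : 0 ≤ ∫ s in Set.Ioi ρ', f s := by
      apply setIntegral_nonneg measurableSet_Ioi
      intro s hs; exact hf_nonneg s (lt_trans hρ' hs)
    linarith
  -- derivative of U at ρ is u ρ
  have hUderiv : HasDerivAt U (u ρ) ρ := by
    set a := ρ / 2 with ha
    have ha0 : 0 < a := by positivity
    have haρ : a < ρ := by simp [ha]; linarith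
    have hIa := hInt a ha0
    have hsplit : ∀ ρ' : ℝ, a < ρ' →
        (∫ s in Set.Ioi ρ', f s) = (∫ s in Set.Ioi a, f s) - ∫ s in a..ρ', f s := by
      intro ρ' hρ'
      rw [intervalIntegral.integral_of_le hρ'.le]
      have hunion : Set.Ioc a ρ' ∪ Set.Ioi ρ' = Set.Ioi a := Set.Ioc_union_Ioi_eq_Ioi hρ'.le
      have := setIntegral_union (Set.Ioc_disjoint_Ioi le_rfl) measurableSet_Ioi
        (hIa.mono_set Set.Ioc_subset_Ioi_self) (hIa.mono_set (Set.Ioi_subset_Ioi hρ'.le))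
        (μ := volume) (f := f)
      rw [hunion] at this
      linarith [this]
    have heq : U =ᶠ[nhds ρ] fun ρ' => ρ' + ((∫ s in Set.Ioi a, f s) - ∫ s in a..ρ', f s) := by
      filter_upwards [Ioi_mem_nhds haρ] with ρ' hρ'
      rw [hU ρ', hsplit ρ' hρ']
    rw [heq.hasDerivAt_iff]
    have hftc : HasDerivAt (fun ρ' => ∫ s in a..ρ', f s) (f ρ) ρ := by
      apply intervalIntegral.integral_hasDerivAt_right
      · rw [intervalIntegrable_iff_integrableOn_Ioc_of_le haρ.le]
        exact hIa.mono_set Set.Ioc_subset_Ioi_self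
      · exact hcont.stronglyMeasurableAtFilter isOpen_Ioi ρ hρ
      · exact (hcont.continuousAt (Ioi_mem_nhds hρ))
    have : HasDerivAt (fun ρ' : ℝ => ρ' + ((∫ s in Set.Ioi a, f s) - ∫ s in a..ρ', f s))
        (1 + (0 - f ρ)) ρ := (hasDerivAt_id ρ).add ((hasDerivAt_const ρ _).sub hftc)
    refine this.congr_deriv ?_
    simp [hf]
  -- now the outer function
  set E := Real.exp (U ρ) with hE
  have hE1 : 1 < E := by rw [hE, show (1:ℝ) = Real.exp 0 by simp]; exact Real.exp_lt_exp.mpr (hUpos ρ hρ)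
  constructor
  · rw [hr]
    apply Real.log_pos
    rw [lt_div_iff₀ (by linarith)]
    linarith
  · -- r ρ' = log(exp(U ρ')+1) - log(exp(U ρ')-1) near ρ
    have heq : r =ᶠ[nhds ρ] fun ρ' => Real.log (Real.exp (U ρ') + 1) - Real.log (Real.exp (U ρ') - 1) := by
      filter_upwards [Ioi_mem_nhds hρ] with ρ' hρ'
      have hE1' : 1 < Real.exp (U ρ') := by
        rw [show (1:ℝ) = Real.exp 0 by simp]; exact Real.exp_lt_exp.mpr (hUpos ρ' hρ')
      rw [hr ρ', Real.log_div (by linarith) (by linarith)]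
    rw [heq.hasDerivAt_iff]
    have hexp : HasDerivAt (fun ρ' => Real.exp (U ρ')) (E * u ρ) ρ := hUderiv.exp
    have h1 : HasDerivAt (fun ρ' => Real.exp (U ρ') + 1) (E * u ρ) ρ := hexp.add_const 1
    have h2 : HasDerivAt (fun ρ' => Real.exp (U ρ') - 1) (E * u ρ) ρ := hexp.sub_const 1
    have hl1 : HasDerivAt (fun ρ' => Real.log (Real.exp (U ρ') + 1)) (E * u ρ / (E + 1)) ρ :=
      h1.log (by linarith)
    have hl2 : HasDerivAt (fun ρ' => Real.log (Real.exp (U ρ') - 1)) (E * u ρ / (E - 1)) ρ :=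
      h2.log (by linarith)
    have hd := hl1.sub hl2
    refine hd.congr_deriv ?_
    rw [hr, Real.sinh_log (div_pos (by linarith) (by linarith))]
    have h3 : E - 1 ≠ 0 := by linarith
    have h4 : E + 1 ≠ 0 := by linarith
    rw [← hE]
    field_simp
    ring
end

section
/- Let n ≥ 3 be an integer and c₀ > 0, define u(ρ) = √(1 − 1/(1 + c₀·sinh^{n−2}(ρ)·cosh²(ρ))), U(ρ) := ρ + ∫_ρ^∞ (1 − u(s)) ds, and r(ρ) := ln( (e^{U(ρ)} + 1)/(e^{U(ρ)} − 1) ) for ρ > 0. Then lim_{ρ→∞} r(ρ)·e^{ρ} = 2. -/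
open Real Filter MeasureTheory

lemma key_lim : Tendsto (fun x : ℝ => x * Real.log ((x + 1) / (x - 1))) atTop (nhds 2) := by
  have h1 := Real.tendsto_mul_log_one_add_div_atTop 1
  have h2 := Real.tendsto_mul_log_one_add_div_atTop (-1)
  have h := h1.sub h2
  norm_num at h
  refine h.congr' ?_
  filter_upwards [eventually_gt_atTop 1] with x hx
  have hx0 : (0:ℝ) < x := by linarith
  have hxm : (0:ℝ) < x - 1 := by linarith
  have e1 : 1 + x⁻¹ = (x + 1) / x := by field_simp
  have e2 : 1 + (-1) / x = (x - 1) / x := by field_simp; ring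
  rw [e1, e2, Real.log_div (by positivity) (ne_of_gt hx0),
    Real.log_div (ne_of_gt hxm) (ne_of_gt hx0),
    Real.log_div (by positivity) (ne_of_gt hxm)]
  ring

/-- With `u(ρ) = √(1 − 1/(1 + c₀ sinh^{n−2}(ρ) cosh²(ρ)))`, `U(ρ) = ρ + ∫_ρ^∞ (1 − u)`, and
`r(ρ) = ln((e^{U(ρ)} + 1)/(e^{U(ρ)} − 1))`, one has `lim_{ρ→∞} r(ρ) e^{ρ} = 2`. -/
theorem stmt_8 (n : ℕ) (hn : 3 ≤ n) (c₀ : ℝ) (hc₀ : 0 < c₀)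
    (u : ℝ → ℝ)
    (hu : ∀ ρ : ℝ, u ρ = Real.sqrt (1 - 1 / (1 + c₀ * Real.sinh ρ ^ (n - 2) * Real.cosh ρ ^ 2)))
    (U : ℝ → ℝ)
    (hU : ∀ ρ : ℝ, U ρ = ρ + ∫ s in Set.Ioi ρ, (1 - u s))
    (r : ℝ → ℝ)
    (hr : ∀ ρ : ℝ, r ρ = Real.log ((Real.exp (U ρ) + 1) / (Real.exp (U ρ) - 1))) :
    Tendsto (fun ρ : ℝ => r ρ * Real.exp ρ) atTop (nhds 2) := by
  set v : ℝ → ℝ := fun s => 1 - u s with hv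
  -- basic bounds for s ≥ 1
  have hbound : ∀ s : ℝ, 1 ≤ s → 0 ≤ v s ∧ v s ≤ 4 / c₀ * Real.exp (-s) := by
    intro s hs
    have hsinh : 1 ≤ Real.sinh s := le_of_lt (lt_of_le_of_lt hs (Real.self_lt_sinh_iff.2 (by linarith)))
    have hsinh' : Real.sinh s ≤ Real.sinh s ^ (n - 2) :=
      le_self_pow₀ hsinh (by omega)
    have hcosh : (1:ℝ) ≤ Real.cosh s ^ 2 := by
      have := Real.one_le_cosh s; nlinarith
    have hexp : Real.exp s / 4 ≤ Real.sinh s := by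
      have h1 : Real.exp (-s) ≤ 1 := Real.exp_le_one_iff.2 (by linarith)
      have h2 : (2:ℝ) ≤ Real.exp s := by
        have := Real.add_one_le_exp s; linarith
      rw [Real.sinh_eq]; linarith
    set f := c₀ * Real.sinh s ^ (n - 2) * Real.cosh s ^ 2 with hf
    have hfpos : c₀ * Real.exp s / 4 ≤ f := by
      have : c₀ * Real.sinh s ≤ c₀ * Real.sinh s ^ (n-2) :=
        mul_le_mul_of_nonneg_left hsinh' hc₀.le
      have h3 : c₀ * Real.sinh s ^ (n-2) ≤ f := by
        rw [hf]
        nlinarith [mul_le_mul_of_nonneg_left hsinh hc₀.le]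
      calc c₀ * Real.exp s / 4 ≤ c₀ * Real.sinh s := by
            rw [mul_div_assoc]; exact mul_le_mul_of_nonneg_left hexp hc₀.le
        _ ≤ c₀ * Real.sinh s ^ (n-2) := this
        _ ≤ f := h3
    have hf1 : (0:ℝ) < f := by
      have : (0:ℝ) < c₀ * Real.exp s / 4 := by positivity
      linarith
    have hx : 0 < 1 / (1 + f) := by positivity
    have hx1 : 1 / (1 + f) ≤ 1 := by
      rw [div_le_one (by linarith)]; linarith
    have husq : u s = Real.sqrt (1 - 1 / (1 + f)) := by rw [hu s, hf]
    have hu1 : u s ≤ 1 := by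
      rw [husq]
      calc Real.sqrt (1 - 1/(1+f)) ≤ Real.sqrt 1 := Real.sqrt_le_sqrt (by linarith)
        _ = 1 := Real.sqrt_one
    have hulb : 1 - 1 / (1 + f) ≤ u s := by
      rw [husq]
      have h01 : 0 ≤ 1 - 1/(1+f) := by linarith
      calc 1 - 1/(1+f) = Real.sqrt ((1 - 1/(1+f))^2) := (Real.sqrt_sq h01).symm
        _ ≤ Real.sqrt (1 - 1/(1+f)) := Real.sqrt_le_sqrt (by nlinarith)
    constructor
    · simp only [hv]; linarith
    · have : v s ≤ 1 / (1 + f) := by simp only [hv]; linarith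
      have hc : 1 / (1 + f) ≤ 4 / c₀ * Real.exp (-s) := by
        have hrw : 4 / c₀ * Real.exp (-s) = 4 / (c₀ * Real.exp s) := by
          rw [Real.exp_neg]; field_simp
        rw [hrw, div_le_div_iff₀ (by linarith) (by positivity)]
        nlinarith
      linarith
  -- measurability
  have hmeas : Measurable v := by
    have : v = fun s => 1 - Real.sqrt (1 - 1 / (1 + c₀ * Real.sinh s ^ (n - 2) * Real.cosh s ^ 2)) := by
      funext s; simp [hv, hu s]
    rw [this]
    fun_prop
  -- integrability on Ioi 1
  have hint : IntegrableOn v (Set.Ioi 1) := by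
    have hg : IntegrableOn (fun s => 4 / c₀ * Real.exp (-s)) (Set.Ioi 1) := by
      have := (exp_neg_integrableOn_Ioi 1 (b := 1) one_pos).const_mul (4 / c₀)
      simpa [IntegrableOn] using this
    refine Integrable.mono hg (hmeas.aestronglyMeasurable.restrict) ?_
    filter_upwards [ae_restrict_mem measurableSet_Ioi] with s hs
    obtain ⟨h0, h1⟩ := hbound s (le_of_lt hs)
    rw [Real.norm_eq_abs, Real.norm_eq_abs, abs_of_nonneg h0, abs_of_nonneg (by positivity)]
    exact h1
  -- the tail integral tends to 0
  set ε : ℝ → ℝ := fun ρ => ∫ s in Set.Ioi ρ, v s with hε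
  have htail : Tendsto ε atTop (nhds 0) := by
    have hIoi := intervalIntegral_tendsto_integral_Ioi 1 hint tendsto_id
    have heq : ∀ᶠ ρ in atTop, (∫ s in Set.Ioi 1, v s) - ∫ s in (1:ℝ)..ρ, v s = ε ρ := by
      filter_upwards [eventually_ge_atTop 1] with ρ hρ
      have hsplit : (∫ s in Set.Ioi 1, v s) =
          (∫ s in Set.Ioc 1 ρ, v s) + ∫ s in Set.Ioi ρ, v s := by
        rw [← MeasureTheory.setIntegral_union (Set.Ioc_disjoint_Ioi le_rfl)
          measurableSet_Ioi (hint.mono_set Set.Ioc_subset_Ioi_self)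
          (hint.mono_set (Set.Ioi_subset_Ioi hρ)), Set.Ioc_union_Ioi_eq_Ioi hρ]
      rw [intervalIntegral.integral_of_le hρ, hε]
      simp only
      linarith [hsplit]
    have := (tendsto_const_nhds (x := ∫ s in Set.Ioi 1, v s)).sub hIoi
    rw [sub_self] at this
    exact this.congr' heq
  -- ε ≥ 0 eventually
  have hεnn : ∀ᶠ ρ in atTop, 0 ≤ ε ρ := by
    filter_upwards [eventually_ge_atTop 1] with ρ hρ
    refine MeasureTheory.setIntegral_nonneg measurableSet_Ioi ?_
    intro s hs
    exact (hbound s (le_trans hρ (le_of_lt hs))).1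
  have hUε : ∀ ρ, U ρ = ρ + ε ρ := fun ρ => hU ρ
  -- U → ∞
  have hUtop : Tendsto U atTop atTop := by
    refine tendsto_atTop_mono' atTop ?_ tendsto_id
    filter_upwards [hεnn] with ρ h
    rw [hUε ρ]; simpa using h
  have hexpU : Tendsto (fun ρ => Real.exp (U ρ)) atTop atTop :=
    Real.tendsto_exp_atTop.comp hUtop
  -- main limit pieces
  have h1 : Tendsto (fun ρ => Real.exp (U ρ) *
      Real.log ((Real.exp (U ρ) + 1) / (Real.exp (U ρ) - 1))) atTop (nhds 2) :=
    key_lim.comp hexpU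
  have h2 : Tendsto (fun ρ => Real.exp (ρ - U ρ)) atTop (nhds 1) := by
    have : Tendsto (fun ρ => ρ - U ρ) atTop (nhds 0) := by
      have := htail.neg
      rw [neg_zero] at this
      refine this.congr fun ρ => ?_
      rw [hUε ρ]; ring
    have h := (Real.continuous_exp.tendsto 0).comp this
    simpa [Function.comp_def] using h
  have := h1.mul h2
  norm_num at this
  refine this.congr fun ρ => ?_
  rw [hr ρ, show Real.exp ρ = Real.exp (U ρ) * Real.exp (ρ - U ρ) by
    rw [← Real.exp_add]; ring_nf]
  ring
end

section
/- Let n ≥ 3 be an integer and c₀ > 0, define u(ρ) = √(1 − 1/(1 + c₀·sinh^{n−2}(ρ)·cosh²(ρ))), U(ρ) := ρ + ∫_ρ^∞ (1 − u(s)) ds, and r(ρ) := ln( (e^{U(ρ)} + 1)/(e^{U(ρ)} − 1) ) for ρ > 0. Then lim_{ρ→∞} ( sinh²(r(ρ))·sinh²(ρ) − 1 ) / r(ρ)^n = −1/(n·c₀). -/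
open Real Filter MeasureTheory Set Topology


private lemma sinh_mul_exp_neg (s : ℝ) :
    Real.sinh s * Real.exp (-s) = (1 - Real.exp (-(2 * s))) / 2 := by
  have h := Real.exp_ne_zero s
  rw [Real.sinh_eq, show -(2*s) = -s + -s by ring, Real.exp_add]
  simp only [Real.exp_neg]
  have h1 : Real.exp s * (Real.exp s)⁻¹ = 1 := mul_inv_cancel₀ h
  linear_combination (1/2 : ℝ) * h1

private lemma cosh_mul_exp_neg (s : ℝ) :
    Real.cosh s * Real.exp (-s) = (1 + Real.exp (-(2 * s))) / 2 := by
  have h := Real.exp_ne_zero s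
  rw [Real.cosh_eq, show -(2*s) = -s + -s by ring, Real.exp_add]
  simp only [Real.exp_neg]
  have h1 : Real.exp s * (Real.exp s)⁻¹ = 1 := mul_inv_cancel₀ h
  linear_combination (1/2 : ℝ) * h1

private lemma sinh_sq_sub (a b : ℝ) :
    Real.sinh a ^ 2 - Real.sinh b ^ 2 = -(Real.sinh (b - a) * Real.sinh (a + b)) := by
  rw [Real.sinh_sub, Real.sinh_add]
  linear_combination Real.sinh b ^ 2 * Real.cosh_sq a - Real.sinh a ^ 2 * Real.cosh_sq b

private lemma integral_exp_neg_mul' (c : ℝ) (hc : 0 < c) (a : ℝ) :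
    ∫ s in Set.Ioi a, Real.exp (-c * s) = Real.exp (-c * a) / c := by
  have hderiv : ∀ x ∈ Set.Ici a, HasDerivAt (fun x : ℝ => -Real.exp (-c * x) / c)
      (Real.exp (-c * x)) x := by
    intro x _
    have h0 : HasDerivAt (fun x : ℝ => -c * x) (-c) x := by
      simpa using (hasDerivAt_id x).const_mul (-c)
    have h : HasDerivAt (fun x : ℝ => Real.exp (-c * x)) (Real.exp (-c * x) * (-c)) x := h0.exp
    refine (h.neg.div_const c).congr_deriv ?_
    rw [div_eq_iff hc.ne']; ring
  have hint : IntegrableOn (fun x : ℝ => Real.exp (-c * x)) (Set.Ioi a) :=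
    exp_neg_integrableOn_Ioi a hc
  have hlim : Tendsto (fun x : ℝ => -Real.exp (-c * x) / c) atTop (𝓝 0) := by
    have h1 : Tendsto (fun x : ℝ => -c * x) atTop atBot := by
      simpa using (tendsto_id (α := ℝ)).const_mul_atTop_of_neg (neg_neg_iff_pos.mpr hc)
    have := (Real.tendsto_exp_atBot.comp h1).neg.div_const c
    simpa using this
  have := integral_Ioi_of_hasDerivAt_of_tendsto' hderiv hint hlim
  rw [this]
  field_simp
  ring

private lemma sinh_exp_half : Tendsto (fun x : ℝ => Real.sinh x * Real.exp (-x)) atTop (𝓝 (1/2)) := by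
  have h2 : Tendsto (fun s : ℝ => Real.exp (-(2 * s))) atTop (𝓝 0) := by
    have : Tendsto (fun s : ℝ => (2:ℝ) * s) atTop atTop :=
      (tendsto_id (α := ℝ)).const_mul_atTop two_pos
    exact Real.tendsto_exp_neg_atTop_nhds_zero.comp this
  have : Tendsto (fun s : ℝ => (1 - Real.exp (-(2 * s))) / 2) atTop (𝓝 ((1 - 0)/2)) :=
    (tendsto_const_nhds.sub h2).div_const 2
  simp only [sinh_mul_exp_neg]
  simpa using this

private lemma cosh_exp_half : Tendsto (fun x : ℝ => Real.cosh x * Real.exp (-x)) atTop (𝓝 (1/2)) := by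
  have h2 : Tendsto (fun s : ℝ => Real.exp (-(2 * s))) atTop (𝓝 0) := by
    have : Tendsto (fun s : ℝ => (2:ℝ) * s) atTop atTop :=
      (tendsto_id (α := ℝ)).const_mul_atTop two_pos
    exact Real.tendsto_exp_neg_atTop_nhds_zero.comp this
  have : Tendsto (fun s : ℝ => (1 + Real.exp (-(2 * s))) / 2) atTop (𝓝 ((1 + 0)/2)) :=
    (tendsto_const_nhds.add h2).div_const 2
  simp only [cosh_mul_exp_neg]
  simpa using this

private lemma stepA (k : ℕ) (c₀ : ℝ) (hc₀ : 0 < c₀) (u : ℝ → ℝ)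
    (hu : ∀ ρ : ℝ, u ρ = Real.sqrt (1 - 1 / (1 + c₀ * Real.sinh ρ ^ (k+1) * Real.cosh ρ ^ 2))) :
    Tendsto (fun s => (1 - u s) * Real.exp (((k:ℝ)+3) * s)) atTop (𝓝 (2^(k+2)/c₀)) := by
  set N : ℝ := (k:ℝ) + 3 with hN
  have hNpos : (0:ℝ) < N := by positivity
  -- Q limit
  have hQeq : ∀ s : ℝ, (1 + c₀ * Real.sinh s ^ (k+1) * Real.cosh s ^ 2) * Real.exp (-N * s)
      = Real.exp (-N * s) + c₀ * (Real.sinh s * Real.exp (-s))^(k+1) * (Real.cosh s * Real.exp (-s))^2 := by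
    intro s
    have he : Real.exp (-N * s) = Real.exp (-s) ^ (k+3) := by
      rw [← Real.exp_nat_mul]
      congr 1
      push_cast
      ring
    have hsplit : Real.exp (-s) ^ (k+3) = Real.exp (-s) ^ (k+1) * Real.exp (-s) ^ 2 := by
      rw [← pow_add]
    simp only [mul_pow, he, hsplit]
    ring
  have hexpN0 : Tendsto (fun s : ℝ => Real.exp (-N * s)) atTop (𝓝 0) := by
    have h1 : Tendsto (fun s : ℝ => N * s) atTop atTop :=
      (tendsto_id (α := ℝ)).const_mul_atTop hNpos
    have := Real.tendsto_exp_neg_atTop_nhds_zero.comp h1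
    refine this.congr (fun s => ?_)
    simp [Function.comp, neg_mul]
  have hQlim : Tendsto (fun s : ℝ => Real.exp (-N * s)
      + c₀ * (Real.sinh s * Real.exp (-s))^(k+1) * (Real.cosh s * Real.exp (-s))^2) atTop
      (𝓝 (c₀ / 2^(k+3))) := by
    have h := hexpN0.add (((sinh_exp_half.pow (k+1)).const_mul c₀).mul (cosh_exp_half.pow 2))
    have hval : (0:ℝ) + c₀ * (1/2)^(k+1) * (1/2)^2 = c₀ / 2^(k+3) := by
      rw [mul_assoc, ← pow_add]
      have : k + 1 + 2 = k + 3 := by ring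
      rw [this, div_pow, one_pow]
      ring
    rw [hval] at h
    exact h
  have hQlim' : Tendsto (fun s : ℝ =>
      (1 + c₀ * Real.sinh s ^ (k+1) * Real.cosh s ^ 2) * Real.exp (-N * s)) atTop
      (𝓝 (c₀ / 2^(k+3))) := hQlim.congr (fun s => (hQeq s).symm)
  -- 1 + P tends to atTop
  have hPtop : Tendsto (fun s : ℝ => 1 + c₀ * Real.sinh s ^ (k+1) * Real.cosh s ^ 2) atTop atTop := by
    have hg : Tendsto (fun s : ℝ => Real.exp (N * s)) atTop atTop :=
      Real.tendsto_exp_atTop.comp ((tendsto_id (α := ℝ)).const_mul_atTop hNpos)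
    have h := hQlim'.pos_mul_atTop (by positivity) hg
    refine h.congr (fun s => ?_)
    rw [mul_assoc, ← Real.exp_add]
    simp
  have hulim : Tendsto u atTop (𝓝 1) := by
    have hinv : Tendsto (fun s : ℝ => (1 + c₀ * Real.sinh s ^ (k+1) * Real.cosh s ^ 2)⁻¹) atTop (𝓝 0) :=
      hPtop.inv_tendsto_atTop
    have h1 : Tendsto (fun s : ℝ => Real.sqrt (1 - 1/(1 + c₀ * Real.sinh s ^ (k+1) * Real.cosh s ^ 2)))
        atTop (𝓝 (Real.sqrt (1 - 0))) := by
      apply Filter.Tendsto.sqrt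
      simpa [one_div] using tendsto_const_nhds.sub hinv
    rw [show Real.sqrt (1 - 0) = 1 by norm_num] at h1
    exact (h1.congr (fun s => (hu s).symm))
  -- main
  have hprod : Tendsto (fun s : ℝ =>
      ((1 + c₀ * Real.sinh s ^ (k+1) * Real.cosh s ^ 2) * Real.exp (-N * s) * (1 + u s))⁻¹) atTop
      (𝓝 ((c₀ / 2^(k+3) * (1 + 1))⁻¹)) := by
    apply Filter.Tendsto.inv₀ (hQlim'.mul (tendsto_const_nhds.add hulim))
    positivity
  have hval2 : ((c₀ / 2^(k+3) * (1 + 1))⁻¹ : ℝ) = 2^(k+2)/c₀ := by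
    rw [show ((2:ℝ)^(k+3)) = 2^(k+2) * 2 by rw [pow_succ]]
    field_simp
    ring
  rw [hval2] at hprod
  refine hprod.congr' ?_
  filter_upwards [eventually_gt_atTop (0:ℝ)] with s hs
  set P : ℝ := c₀ * Real.sinh s ^ (k+1) * Real.cosh s ^ 2 with hP
  have hsinh_pos : 0 < Real.sinh s := Real.sinh_pos_iff.2 hs
  have hPpos : 0 < P := by
    apply mul_pos (mul_pos hc₀ (pow_pos hsinh_pos _)) (pow_pos (Real.cosh_pos s) _)
  have hden : (0:ℝ) < 1 + P := by linarith
  have harg : 0 ≤ 1 - 1/(1+P) := by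
    have : 1/(1+P) ≤ 1 := by
      rw [div_le_one hden]; linarith
    linarith
  have h1 : u s ^ 2 = 1 - 1/(1+P) := by rw [hu]; exact Real.sq_sqrt harg
  have husq : u s ^ 2 * (1+P) = P := by
    rw [h1]; field_simp; ring
  have hu_nonneg : 0 ≤ u s := by rw [hu]; exact Real.sqrt_nonneg _
  have hexp : Real.exp (N*s) * Real.exp (-N*s) = 1 := by
    rw [← Real.exp_add]; simp
  have hkey : ((1 - u s) * Real.exp (N * s)) * ((1+P) * Real.exp (-N*s) * (1 + u s)) = 1 := by
    have : ((1 - u s) * Real.exp (N * s)) * ((1+P) * Real.exp (-N*s) * (1 + u s))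
        = ((1 - u s^2) * (1+P)) * (Real.exp (N*s) * Real.exp (-N*s)) := by ring
    rw [this, hexp]
    linear_combination (-1 : ℝ) * husq
  exact (eq_inv_of_mul_eq_one_left hkey).symm

private lemma stepB (N b : ℝ) (hN : 0 < N) (hb : 0 < b) (f : ℝ → ℝ) (hmeas : Measurable f)
    (hA : Tendsto (fun s => f s * Real.exp (N * s)) atTop (𝓝 b)) :
    Tendsto (fun ρ => (∫ s in Set.Ioi ρ, f s) * Real.exp (N * ρ)) atTop (𝓝 (b/N)) := by
  rw [Metric.tendsto_atTop]
  intro δ hδ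
  set δ' : ℝ := min (N*δ/2) (b/2) with hδ'def
  have hδ'pos : 0 < δ' := lt_min (by positivity) (by positivity)
  have hδ'b : δ' ≤ b/2 := min_le_right _ _
  have hδ'δ : δ'/N ≤ δ/2 := by
    rw [div_le_iff₀ hN]
    calc δ' ≤ N*δ/2 := min_le_left _ _
      _ = δ/2*N := by ring
  obtain ⟨R, hR⟩ := (Metric.tendsto_atTop.mp hA) δ' hδ'pos
  refine ⟨R, fun ρ hρ => ?_⟩
  have hbd : ∀ s ∈ Set.Ioi ρ, (b - δ') * Real.exp (-N*s) ≤ f s ∧ f s ≤ (b + δ') * Real.exp (-N*s) := by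
    intro s hs
    have h := hR s (le_trans hρ (le_of_lt hs))
    rw [Real.dist_eq, abs_lt] at h
    have he : (0:ℝ) < Real.exp (-N*s) := Real.exp_pos _
    have hfs : (f s * Real.exp (N*s)) * Real.exp (-N*s) = f s := by
      rw [mul_assoc, ← Real.exp_add, show N*s + -N*s = 0 by ring, Real.exp_zero, mul_one]
    constructor
    · rw [← hfs]
      exact mul_le_mul_of_nonneg_right (by linarith [h.1]) he.le
    · rw [← hfs]
      exact mul_le_mul_of_nonneg_right (by linarith [h.2]) he.le
  have hint1 : IntegrableOn (fun s => (b+δ') * Real.exp (-N*s)) (Set.Ioi ρ) :=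
    (exp_neg_integrableOn_Ioi ρ hN).const_mul _
  have hint2 : IntegrableOn (fun s => (b-δ') * Real.exp (-N*s)) (Set.Ioi ρ) :=
    (exp_neg_integrableOn_Ioi ρ hN).const_mul _
  have hint0 : IntegrableOn f (Set.Ioi ρ) := by
    refine Integrable.mono hint1 hmeas.aestronglyMeasurable ?_
    rw [ae_restrict_iff' measurableSet_Ioi]
    filter_upwards with s hs
    obtain ⟨hl, hu2⟩ := hbd s hs
    have h0 : 0 ≤ f s := le_trans (mul_nonneg (by linarith) (Real.exp_pos _).le) hl
    rw [Real.norm_eq_abs, Real.norm_eq_abs, abs_of_nonneg h0,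
      abs_of_nonneg (mul_nonneg (by linarith) (Real.exp_pos _).le)]
    exact hu2
  have hI1 : ∫ s in Set.Ioi ρ, (b+δ') * Real.exp (-N*s) = (b+δ') * (Real.exp (-N*ρ)/N) := by
    rw [MeasureTheory.integral_const_mul, integral_exp_neg_mul' N hN ρ]
  have hI2 : ∫ s in Set.Ioi ρ, (b-δ') * Real.exp (-N*s) = (b-δ') * (Real.exp (-N*ρ)/N) := by
    rw [MeasureTheory.integral_const_mul, integral_exp_neg_mul' N hN ρ]
  have hle1 : (∫ s in Set.Ioi ρ, f s) ≤ (b+δ') * (Real.exp (-N*ρ)/N) := by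
    rw [← hI1]
    exact setIntegral_mono_on hint0 hint1 measurableSet_Ioi (fun s hs => (hbd s hs).2)
  have hle2 : (b-δ') * (Real.exp (-N*ρ)/N) ≤ ∫ s in Set.Ioi ρ, f s := by
    rw [← hI2]
    exact setIntegral_mono_on hint2 hint0 measurableSet_Ioi (fun s hs => (hbd s hs).1)
  have hepos : (0:ℝ) < Real.exp (N*ρ) := Real.exp_pos _
  have hee : ∀ c : ℝ, c * (Real.exp (-N*ρ)/N) * Real.exp (N*ρ) = c/N := by
    intro c
    have h1 : Real.exp (-N*ρ) * Real.exp (N*ρ) = 1 := by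
      rw [← Real.exp_add, show -N*ρ + N*ρ = 0 by ring, Real.exp_zero]
    calc c * (Real.exp (-N*ρ)/N) * Real.exp (N*ρ)
        = c * ((Real.exp (-N*ρ) * Real.exp (N*ρ))/N) := by ring
      _ = c/N := by rw [h1]; ring
  have h1' : (∫ s in Set.Ioi ρ, f s) * Real.exp (N*ρ) ≤ (b+δ')/N := by
    have := mul_le_mul_of_nonneg_right hle1 hepos.le
    rwa [hee] at this
  have h2' : (b-δ')/N ≤ (∫ s in Set.Ioi ρ, f s) * Real.exp (N*ρ) := by
    have := mul_le_mul_of_nonneg_right hle2 hepos.le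
    rwa [hee] at this
  rw [Real.dist_eq, abs_lt]
  have hs1 : (b+δ')/N = b/N + δ'/N := by rw [add_div]
  have hs2 : (b-δ')/N = b/N - δ'/N := by rw [sub_div]
  constructor <;> [skip; skip] <;> nlinarith [h1', h2', hδ'δ, hδ]

/-- With `u(ρ) = √(1 − 1/(1 + c₀ sinh^{n−2}(ρ) cosh²(ρ)))`, `U(ρ) = ρ + ∫_ρ^∞ (1 − u)`, and
`r(ρ) = ln((e^{U(ρ)} + 1)/(e^{U(ρ)} − 1))`, one has
`lim_{ρ→∞} (sinh²(r(ρ)) sinh²(ρ) − 1)/r(ρ)ⁿ = −1/(n c₀)`. -/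
theorem stmt_9 (n : ℕ) (hn : 3 ≤ n) (c₀ : ℝ) (hc₀ : 0 < c₀)
    (u : ℝ → ℝ)
    (hu : ∀ ρ : ℝ, u ρ = Real.sqrt (1 - 1 / (1 + c₀ * Real.sinh ρ ^ (n - 2) * Real.cosh ρ ^ 2)))
    (U : ℝ → ℝ)
    (hU : ∀ ρ : ℝ, U ρ = ρ + ∫ s in Set.Ioi ρ, (1 - u s))
    (r : ℝ → ℝ)
    (hr : ∀ ρ : ℝ, r ρ = Real.log ((Real.exp (U ρ) + 1) / (Real.exp (U ρ) - 1))) :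
    Tendsto (fun ρ : ℝ =>
        (Real.sinh (r ρ) ^ 2 * Real.sinh ρ ^ 2 - 1) / r ρ ^ n) atTop
      (nhds (-1 / ((n : ℝ) * c₀))) := by
  obtain ⟨k, rfl⟩ : ∃ k, n = k + 3 := ⟨n - 3, by omega⟩
  set N : ℝ := (k:ℝ) + 3 with hNdef
  have hNpos : (0:ℝ) < N := by positivity
  have hu' : ∀ ρ : ℝ, u ρ = Real.sqrt (1 - 1 / (1 + c₀ * Real.sinh ρ ^ (k+1) * Real.cosh ρ ^ 2)) :=
    fun ρ => hu ρ
  have hmeas : Measurable u := by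
    rw [funext hu']
    fun_prop
  have hA := stepA k c₀ hc₀ u hu'
  have hmeasf : Measurable (fun s => 1 - u s) := measurable_const.sub hmeas
  have hB0 := stepB N (2^(k+2)/c₀) hNpos (by positivity) (fun s => 1 - u s) hmeasf
    (by exact hA)
  have hUI : ∀ ρ : ℝ, U ρ - ρ = ∫ s in Set.Ioi ρ, (1 - u s) := fun ρ => by rw [hU]; ring
  have hB : Tendsto (fun ρ => (U ρ - ρ) * Real.exp (N * ρ)) atTop (𝓝 ((2^(k+2)/c₀)/N)) := by
    refine hB0.congr (fun ρ => ?_)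
    rw [hUI]
  have hexpNeg : Tendsto (fun ρ : ℝ => Real.exp (-N * ρ)) atTop (𝓝 0) := by
    have h1 : Tendsto (fun s : ℝ => N * s) atTop atTop :=
      (tendsto_id (α := ℝ)).const_mul_atTop hNpos
    have := Real.tendsto_exp_neg_atTop_nhds_zero.comp h1
    refine this.congr (fun s => ?_)
    simp [Function.comp, neg_mul]
  have hε0 : Tendsto (fun ρ => U ρ - ρ) atTop (𝓝 0) := by
    have h := hB.mul hexpNeg
    rw [mul_zero] at h
    refine h.congr (fun ρ => ?_)
    rw [mul_assoc, ← Real.exp_add, show N*ρ + -N*ρ = 0 by ring, Real.exp_zero, mul_one]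
  have hεpos : ∀ᶠ ρ in atTop, 0 < U ρ - ρ := by
    have hgt := hB.eventually (eventually_gt_nhds (show (0:ℝ) < (2^(k+2)/c₀)/N by positivity))
    filter_upwards [hgt] with ρ h
    by_contra hcon
    push_neg at hcon
    nlinarith [Real.exp_pos (N*ρ)]
  have hUtop : Tendsto U atTop atTop := by
    refine tendsto_atTop_mono' atTop ?_ (tendsto_id (α := ℝ))
    filter_upwards [hεpos] with ρ h
    simp only [id_eq]
    linarith
  have hYtop : Tendsto (fun ρ => Real.exp (U ρ)) atTop atTop := Real.tendsto_exp_atTop.comp hUtop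
  have hY1 : ∀ᶠ ρ in atTop, 1 < Real.exp (U ρ) := hYtop.eventually_gt_atTop 1
  have hsinhU : ∀ᶠ ρ in atTop, 0 < Real.sinh (U ρ) := by
    filter_upwards [hUtop.eventually_gt_atTop 0] with ρ h
    exact Real.sinh_pos_iff.2 h
  have hrpos : ∀ᶠ ρ in atTop, 0 < r ρ := by
    filter_upwards [hY1] with ρ h
    rw [hr]
    apply Real.log_pos
    rw [lt_div_iff₀ (by linarith)]
    linarith
  have hsinhr : ∀ᶠ ρ in atTop, Real.sinh (r ρ) = (Real.sinh (U ρ))⁻¹ := by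
    filter_upwards [hY1] with ρ h
    have hy0 : (0:ℝ) < Real.exp (U ρ) := Real.exp_pos _
    have hy1 : (0:ℝ) < Real.exp (U ρ) - 1 := by linarith
    have harg : 0 < (Real.exp (U ρ) + 1)/(Real.exp (U ρ) - 1) := by positivity
    rw [hr, Real.sinh_log harg, Real.sinh_eq, Real.exp_neg]
    have hne : Real.exp (U ρ) ≠ 0 := ne_of_gt hy0
    have hinv1 : (Real.exp (U ρ))⁻¹ < 1 := by
      rw [inv_lt_one_iff₀]
      right; exact h
    have hsne : Real.exp (U ρ) - (Real.exp (U ρ))⁻¹ ≠ 0 := by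
      have : (1:ℝ) < Real.exp (U ρ) := h
      nlinarith
    have h2 : (-1 + Real.exp (U ρ)^2) ≠ 0 := by nlinarith
    field_simp
    linear_combination (-4*Real.exp (U ρ)) * (mul_inv_cancel₀ h2)
  -- limit pieces
  have hslope : Tendsto (fun x : ℝ => Real.sinh x / x) (𝓝[≠] 0) (𝓝 1) := by
    have h := hasDerivAt_iff_tendsto_slope.mp (Real.hasDerivAt_sinh 0)
    simp only [slope_fun_def_field, Real.sinh_zero, Real.cosh_zero, sub_zero] at h
    exact h
  have hεne : Tendsto (fun ρ => U ρ - ρ) atTop (𝓝[≠] 0) :=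
    tendsto_nhdsWithin_of_tendsto_nhds_of_eventually_within _ hε0
      (by filter_upwards [hεpos] with ρ h; exact ne_of_gt h)
  have L1 : Tendsto (fun ρ => Real.sinh (U ρ - ρ) / (U ρ - ρ)) atTop (𝓝 1) := hslope.comp hεne
  have hsum : Tendsto (fun ρ : ℝ => ρ + U ρ) atTop atTop := tendsto_id.atTop_add_atTop hUtop
  have L3 : Tendsto (fun ρ => Real.sinh (ρ + U ρ) * Real.exp (-(ρ + U ρ))) atTop (𝓝 (1/2)) :=
    sinh_exp_half.comp hsum
  have hbase : Tendsto (fun ρ => Real.exp (U ρ)/Real.sinh (U ρ)) atTop (𝓝 2) := by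
    have h := (sinh_exp_half.comp hUtop).inv₀ (by norm_num : (1/2:ℝ) ≠ 0)
    rw [show ((1/2:ℝ))⁻¹ = 2 by norm_num] at h
    refine h.congr' ?_
    filter_upwards [hsinhU] with ρ hs
    simp only [Function.comp_apply]
    rw [Real.exp_neg]
    have h1 : Real.exp (U ρ) ≠ 0 := Real.exp_ne_zero _
    have h2 : Real.sinh (U ρ) ≠ 0 := ne_of_gt hs
    field_simp
  have L4 : Tendsto (fun ρ => (Real.exp (U ρ)/Real.sinh (U ρ))^2) atTop (𝓝 ((2:ℝ)^2)) := hbase.pow 2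
  have hrY : Tendsto (fun ρ => r ρ * Real.exp (U ρ)) atTop (𝓝 (1 * (2/(1-0)))) := by
    have hcomp : Tendsto (fun ρ => (Real.exp (U ρ) - 1)/2) atTop atTop := by
      apply Tendsto.atTop_div_const (by norm_num : (0:ℝ) < 2)
      simpa [sub_eq_add_neg] using tendsto_atTop_add_const_right atTop (-1 : ℝ) hYtop
    have h2 := (Real.tendsto_mul_log_one_add_div_atTop 1).comp hcomp
    have h3 : Tendsto (fun ρ => 2/(1 - (Real.exp (U ρ))⁻¹)) atTop (𝓝 (2/(1-0))) :=
      tendsto_const_nhds.div (tendsto_const_nhds.sub hYtop.inv_tendsto_atTop) (by norm_num)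
    have h4 := h2.mul h3
    refine h4.congr' ?_
    filter_upwards [hY1] with ρ h
    have hy1 : (0:ℝ) < Real.exp (U ρ) - 1 := by linarith
    have hyne : Real.exp (U ρ) ≠ 0 := Real.exp_ne_zero _
    have hy1ne : Real.exp (U ρ) - 1 ≠ 0 := ne_of_gt hy1
    simp only [Function.comp_apply]
    have harg : 1 + 1/((Real.exp (U ρ) - 1)/2) = (Real.exp (U ρ)+1)/(Real.exp (U ρ)-1) := by
      field_simp
      ring
    rw [harg, ← hr]
    have hinvne : 1 - (Real.exp (U ρ))⁻¹ ≠ 0 := by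
      have : (Real.exp (U ρ))⁻¹ < 1 := by
        rw [inv_lt_one_iff₀]; right; exact h
      linarith
    field_simp
  rw [show (1 * (2/(1-0)) : ℝ) = 2 by norm_num] at hrY
  have L5 : Tendsto (fun ρ => ((r ρ * Real.exp (U ρ))⁻¹)^(k+3)) atTop (𝓝 (((2:ℝ)⁻¹)^(k+3))) :=
    (hrY.inv₀ two_ne_zero).pow (k+3)
  have L6 : Tendsto (fun ρ => (Real.exp (U ρ)/Real.exp ρ)^(k+2)) atTop (𝓝 1) := by
    have hq : Tendsto (fun ρ => Real.exp (U ρ - ρ)) atTop (𝓝 1) := by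
      have := Real.continuous_exp.continuousAt.tendsto.comp hε0
      simpa [Function.comp_def] using this
    have h := hq.pow (k+2)
    rw [one_pow] at h
    refine h.congr (fun ρ => ?_)
    rw [Real.exp_sub]
  have hmain := (((((L1.mul hB).mul L3).mul L4).mul L5).mul L6).neg
  have hvS : -(1 * ((2^(k+2)/c₀)/N) * (1/2) * (2:ℝ)^2 * ((2:ℝ)⁻¹)^(k+3) * 1) = -1/(N * c₀) := by
    rw [inv_pow, show (2:ℝ)^(k+3) = 2^(k+2)*2 by rw [pow_succ]]
    have h2ne : ((2:ℝ)^(k+2)) ≠ 0 := by positivity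
    field_simp
  rw [hvS] at hmain
  have hev : (fun ρ => -(Real.sinh (U ρ - ρ) / (U ρ - ρ) * ((U ρ - ρ) * Real.exp (N * ρ)) *
        (Real.sinh (ρ + U ρ) * Real.exp (-(ρ + U ρ))) * (Real.exp (U ρ)/Real.sinh (U ρ))^2 *
        ((r ρ * Real.exp (U ρ))⁻¹)^(k+3) * (Real.exp (U ρ)/Real.exp ρ)^(k+2)))
      =ᶠ[atTop] (fun ρ => (Real.sinh (r ρ) ^ 2 * Real.sinh ρ ^ 2 - 1) / r ρ ^ (k+3)) := by
    filter_upwards [hεpos, hY1, hsinhU, hrpos, hsinhr] with ρ hε hY hsU hr0 hsr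
    have hεne' : U ρ - ρ ≠ 0 := ne_of_gt hε
    have hrne : r ρ ≠ 0 := ne_of_gt hr0
    have hXne : Real.exp ρ ≠ 0 := Real.exp_ne_zero _
    have hYne : Real.exp (U ρ) ≠ 0 := Real.exp_ne_zero _
    have hsUne : Real.sinh (U ρ) ≠ 0 := ne_of_gt hsU
    have hid : Real.sinh ρ^2 = Real.sinh (U ρ)^2 - Real.sinh (U ρ - ρ) * Real.sinh (ρ + U ρ) := by
      have := sinh_sq_sub ρ (U ρ)
      linarith
    have hXn : Real.exp (N*ρ) = Real.exp ρ^(k+3) := by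
      rw [← Real.exp_nat_mul]
      congr 1
      push_cast
      ring
    have hEneg : Real.exp (-(ρ + U ρ)) = (Real.exp ρ * Real.exp (U ρ))⁻¹ := by
      rw [Real.exp_neg, Real.exp_add]
    rw [hsr, hid, hXn, hEneg]
    simp only [div_pow, inv_pow, mul_pow]
    field_simp
    ring
  have hfin := hmain.congr' hev
  convert hfin using 2
  push_cast
  ring
end
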